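/- Assume rank 𝒪_N(C,A) = N and let B_1,…,B_K ∈ ℝ^{N×M} be linearly independent. Then for every α⋆ ∈ ℝ^K and every α ∈ ℝ^K with α ≠ α⋆ there exists a control ε ∈ L²((0,T);ℝ^M) such that ‖C·φ_T(B(α⋆),ε) − C·φ_T(B(α),ε)‖₂² > 0. In particular, α = α⋆ is the unique solution of the min-max problem min_{α∈ℝ^K} max_{ε∈E_ad} ‖C·φ_T(B(α⋆),ε) − C·φ_T(B(α),ε)‖₂² whenever E_ad contains the discriminating controls. -/

import Mathlib

open MeasureTheory Matrix

/-- Final state `φ_T(B,ε) = e^{TA} φ₀ + ∫_0^T e^{(T-s)A} B ε(s) ds`. -/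
noncomputable def phiT {N M : ℕ} (T : ℝ) (A : Matrix (Fin N) (Fin N) ℝ)
    (φ₀ : Fin N → ℝ) (B : Matrix (Fin N) (Fin M) ℝ) (ε : ℝ → Fin M → ℝ) : Fin N → ℝ :=
  (NormedSpace.exp (T • A)).mulVec φ₀ +
    ∫ s in (0:ℝ)..T, (NormedSpace.exp ((T - s) • A) * B).mulVec (ε s)

/-- The observability matrix `𝒪_N(C,A)`. -/
def obsMat {N P : ℕ} (A : Matrix (Fin N) (Fin N) ℝ) (C : Matrix (Fin P) (Fin N) ℝ) :
    Matrix (Fin N × Fin P) (Fin N) ℝ :=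
  Matrix.of fun jp i => (C * A ^ (jp.1 : ℕ)) jp.2 i

private lemma exp_cont {n : ℕ} (T : ℝ) (A : Matrix (Fin n) (Fin n) ℝ) :
    Continuous fun s : ℝ => NormedSpace.exp ((T - s) • A) := by
  letI : SeminormedRing (Matrix (Fin n) (Fin n) ℝ) := Matrix.linftyOpSemiNormedRing
  letI : NormedRing (Matrix (Fin n) (Fin n) ℝ) := Matrix.linftyOpNormedRing
  letI : NormedAlgebra ℝ (Matrix (Fin n) (Fin n) ℝ) := Matrix.linftyOpNormedAlgebra
  letI : NormedAlgebra ℚ (Matrix (Fin n) (Fin n) ℝ) := NormedAlgebra.restrictScalars ℚ ℝ _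
  exact NormedSpace.exp_continuous.comp
    ((continuous_const.sub continuous_id).smul continuous_const)

private lemma key_D_eq_zero {N M P : ℕ} {T : ℝ} (hT : 0 < T)
    (A : Matrix (Fin N) (Fin N) ℝ) (C : Matrix (Fin P) (Fin N) ℝ)
    (hrank : (obsMat A C).rank = N)
    (D : Matrix (Fin N) (Fin M) ℝ)
    (hzero : ∀ u ∈ Set.Ioo (0:ℝ) T, C * NormedSpace.exp (u • A) * D = 0) :
    D = 0 := by
  letI : SeminormedRing (Matrix (Fin N) (Fin N) ℝ) := Matrix.linftyOpSemiNormedRing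
  letI : NormedRing (Matrix (Fin N) (Fin N) ℝ) := Matrix.linftyOpNormedRing
  letI : NormedAlgebra ℝ (Matrix (Fin N) (Fin N) ℝ) := Matrix.linftyOpNormedAlgebra
  letI : NormedAddCommGroup (Matrix (Fin P) (Fin M) ℝ) := Matrix.normedAddCommGroup
  letI : NormedSpace ℝ (Matrix (Fin P) (Fin M) ℝ) := Matrix.normedSpace
  have main : ∀ n : ℕ, ∀ u ∈ Set.Ioo (0:ℝ) T,
      C * A ^ n * NormedSpace.exp (u • A) * D = 0 := by
    intro n
    induction n with
    | zero => intro u hu; simpa using hzero u hu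
    | succ n ih =>
      intro u hu
      set L : Matrix (Fin N) (Fin N) ℝ →ₗ[ℝ] Matrix (Fin P) (Fin M) ℝ :=
        { toFun := fun X => C * A ^ n * X * D
          map_add' := fun X Y => by
            show C * A ^ n * (X + Y) * D = C * A ^ n * X * D + C * A ^ n * Y * D
            rw [Matrix.mul_add, Matrix.add_mul]
          map_smul' := fun r X => by
            show C * A ^ n * (r • X) * D = r • (C * A ^ n * X * D)
            rw [Matrix.mul_smul, Matrix.smul_mul] } with hL
      have hd0 := (LinearMap.toContinuousLinearMap L).hasFDerivAt.comp_hasDerivAt u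
          (hasDerivAt_exp_smul_const' A u)
      have hd : HasDerivAt (fun u : ℝ =>
            (LinearMap.toContinuousLinearMap L) (NormedSpace.exp (u • A)))
          ((LinearMap.toContinuousLinearMap L) (A * NormedSpace.exp (u • A))) u := hd0
      have heq : (fun _ : ℝ => (0 : Matrix (Fin P) (Fin M) ℝ)) =ᶠ[nhds u]
          (fun u : ℝ => (LinearMap.toContinuousLinearMap L) (NormedSpace.exp (u • A))) := by
        filter_upwards [isOpen_Ioo.mem_nhds hu] with x hx
        show (0 : Matrix (Fin P) (Fin M) ℝ) = C * A ^ n * NormedSpace.exp (x • A) * D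
        exact (ih x hx).symm
      have h0 : HasDerivAt (fun _ : ℝ => (0 : Matrix (Fin P) (Fin M) ℝ))
          ((LinearMap.toContinuousLinearMap L) (A * NormedSpace.exp (u • A))) u :=
        hd.congr_of_eventuallyEq heq
      have hz : (LinearMap.toContinuousLinearMap L) (A * NormedSpace.exp (u • A)) = 0 :=
        h0.unique (hasDerivAt_const u 0)
      have hz' : C * A ^ n * (A * NormedSpace.exp (u • A)) * D = 0 := hz
      calc C * A ^ (n + 1) * NormedSpace.exp (u • A) * D
          = C * A ^ n * (A * NormedSpace.exp (u • A)) * D := by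
            rw [pow_succ, ← Matrix.mul_assoc, Matrix.mul_assoc (C * A ^ n) A]
        _ = 0 := hz'
  -- injectivity of the observability map
  have hinj : Function.Injective (obsMat A C).mulVecLin := by
    rw [← LinearMap.ker_eq_bot]
    have h1 := (obsMat A C).mulVecLin.finrank_range_add_finrank_ker
    rw [Matrix.rank] at hrank
    rw [hrank, Module.finrank_fin_fun] at h1
    exact Submodule.finrank_eq_zero.mp (by omega)
  have hu0 : (T / 2) ∈ Set.Ioo (0:ℝ) T := ⟨by positivity, by linarith⟩
  set E := NormedSpace.exp ((T / 2) • A) with hE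
  have hED : E * D = 0 := by
    ext i j
    have hx : (obsMat A C).mulVecLin (fun i => (E * D) i j) = 0 := by
      ext ⟨n, p⟩
      have h2 : (C * A ^ (n : ℕ) * (E * D)) p j = 0 := by
        rw [← Matrix.mul_assoc, hE, main (n : ℕ) (T / 2) hu0]
        simp
      simpa [Matrix.mulVecLin, obsMat, Matrix.mulVec, dotProduct, Matrix.mul_apply] using h2
    have h3 : (fun i => (E * D) i j) = (0 : Fin N → ℝ) := hinj (by rw [hx, map_zero])
    exact congrFun h3 i
  have hEinv : NormedSpace.exp (-((T / 2) • A)) * E = 1 := by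
    rw [← Matrix.exp_add_of_commute _ _ ((Commute.refl ((T / 2) • A)).neg_left), neg_add_cancel,
      NormedSpace.exp_zero]
  calc D = (1 : Matrix (Fin N) (Fin N) ℝ) * D := (Matrix.one_mul D).symm
    _ = NormedSpace.exp (-((T / 2) • A)) * E * D := by rw [hEinv]
    _ = NormedSpace.exp (-((T / 2) • A)) * (E * D) := Matrix.mul_assoc _ _ _
    _ = 0 := by rw [hED, Matrix.mul_zero]

/-- for a fully observable system and linearly independent `B_1,…,B_K`,
any `α ≠ α⋆` can be discriminated from `α⋆` by some `L²` control; in particular `α = α⋆`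
is the unique solution of the min-max problem. -/
theorem minmax_unique_solution {N M P K : ℕ}
    (hN : 0 < N) (hM : 0 < M) (hP : 0 < P) (hK : 0 < K)
    (T : ℝ) (hT : 0 < T)
    (A : Matrix (Fin N) (Fin N) ℝ) (C : Matrix (Fin P) (Fin N) ℝ)
    (φ₀ : Fin N → ℝ)
    (hrank : (obsMat A C).rank = N)
    (Bs : Fin K → Matrix (Fin N) (Fin M) ℝ)
    (hli : LinearIndependent ℝ Bs) :
    ∀ αstar α : Fin K → ℝ, α ≠ αstar →
      ∃ ε : ℝ → Fin M → ℝ,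
        MemLp ε 2 (volume.restrict (Set.Ioc (0:ℝ) T)) ∧
        0 < (C.mulVec (phiT T A φ₀ (∑ j, αstar j • Bs j) ε) -
              C.mulVec (phiT T A φ₀ (∑ j, α j • Bs j) ε)) ⬝ᵥ
            (C.mulVec (phiT T A φ₀ (∑ j, αstar j • Bs j) ε) -
              C.mulVec (phiT T A φ₀ (∑ j, α j • Bs j) ε)) := by
  intro αstar α hne
  by_contra hcon
  push_neg at hcon
  set Bst := ∑ j, αstar j • Bs j with hBst
  set Bα := ∑ j, α j • Bs j with hBα
  set D := Bst - Bα with hD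
  have hDne : D ≠ 0 := by
    intro h0
    apply hne
    have hsum : ∑ j, (αstar j - α j) • Bs j = 0 := by
      rw [← h0, hD, hBst, hBα, ← Finset.sum_sub_distrib]
      exact Finset.sum_congr rfl fun j _ => (sub_smul _ _ _)
    have := Fintype.linearIndependent_iff.mp hli _ hsum
    funext j
    have := this j
    linarith [this]
  set W : ℝ → Matrix (Fin N) (Fin N) ℝ := fun s => NormedSpace.exp ((T - s) • A) with hW
  have hWc : Continuous W := exp_cont T A
  haveI : IsFiniteMeasure (volume.restrict (Set.Ioc (0:ℝ) T)) :=
    ⟨by rw [Measure.restrict_apply_univ]; exact measure_Ioc_lt_top⟩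
  -- Step A: the integrated output difference vanishes for truncated constant controls
  have hkeyv : ∀ t ∈ Set.Icc (0:ℝ) T, ∀ v : Fin M → ℝ,
      C.mulVec (∫ s in (0:ℝ)..t, (W s * D).mulVec v) = 0 := by
    intro t ht v
    set ε : ℝ → Fin M → ℝ := Set.indicator {x : ℝ | x ≤ t} (fun _ => v) with hε
    have hmem : MemLp ε 2 (volume.restrict (Set.Ioc (0:ℝ) T)) :=
      (memLp_const v).indicator (measurableSet_le measurable_id measurable_const)
    have hle := hcon ε hmem
    have hrew : ∀ B : Matrix (Fin N) (Fin M) ℝ,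
        (fun s => (W s * B).mulVec (ε s)) =
          Set.indicator {x : ℝ | x ≤ t} (fun s => (W s * B).mulVec v) := by
      intro B
      funext s
      by_cases hs : s ∈ {x : ℝ | x ≤ t}
      · rw [hε, Set.indicator_of_mem hs, Set.indicator_of_mem hs]
      · rw [hε, Set.indicator_of_notMem hs, Set.indicator_of_notMem hs, Matrix.mulVec_zero]
    have hint : ∀ B : Matrix (Fin N) (Fin M) ℝ,
        (∫ s in (0:ℝ)..T, (W s * B).mulVec (ε s)) = ∫ s in (0:ℝ)..t, (W s * B).mulVec v := by
      intro B
      rw [hrew B]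
      exact intervalIntegral.integral_indicator ht
    have hcont : ∀ B : Matrix (Fin N) (Fin M) ℝ,
        Continuous fun s => (W s * B).mulVec v :=
      fun B => (hWc.matrix_mul continuous_const).matrix_mulVec continuous_const
    have harg : phiT T A φ₀ Bst ε - phiT T A φ₀ Bα ε =
        ∫ s in (0:ℝ)..t, (W s * D).mulVec v := by
      show (NormedSpace.exp (T • A)).mulVec φ₀ +
            (∫ s in (0:ℝ)..T, (W s * Bst).mulVec (ε s)) -
          ((NormedSpace.exp (T • A)).mulVec φ₀ +
            ∫ s in (0:ℝ)..T, (W s * Bα).mulVec (ε s)) = _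
      rw [add_sub_add_left_eq_sub, hint Bst, hint Bα,
        ← intervalIntegral.integral_sub ((hcont Bst).intervalIntegrable 0 t)
          ((hcont Bα).intervalIntegrable 0 t)]
      congr 1
      funext s
      rw [← Matrix.sub_mulVec, ← Matrix.mul_sub]
    have hw : C.mulVec (phiT T A φ₀ Bst ε) - C.mulVec (phiT T A φ₀ Bα ε) =
        C.mulVec (∫ s in (0:ℝ)..t, (W s * D).mulVec v) := by
      rw [← Matrix.mulVec_sub, harg]
    have hnn : 0 ≤ (C.mulVec (phiT T A φ₀ Bst ε) - C.mulVec (phiT T A φ₀ Bα ε)) ⬝ᵥ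
        (C.mulVec (phiT T A φ₀ Bst ε) - C.mulVec (phiT T A φ₀ Bα ε)) :=
      Finset.sum_nonneg fun i _ => mul_self_nonneg _
    have hzero := dotProduct_self_eq_zero.mp (le_antisymm hle hnn)
    rw [hw] at hzero
    exact hzero
  -- Step B: differentiate to kill the integrand
  have hg : ∀ t ∈ Set.Ioo (0:ℝ) T, ∀ v : Fin M → ℝ,
      C.mulVec ((W t * D).mulVec v) = 0 := by
    intro t ht v
    set G : ℝ → Fin N → ℝ := fun s => (W s * D).mulVec v with hG
    have hGc : Continuous G := (hWc.matrix_mul continuous_const).matrix_mulVec continuous_const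
    have hF : HasDerivAt (fun u => ∫ s in (0:ℝ)..u, G s) (G t) t :=
      intervalIntegral.integral_hasDerivAt_right (hGc.intervalIntegrable 0 t)
        hGc.stronglyMeasurable.stronglyMeasurableAtFilter hGc.continuousAt
    set Cl := LinearMap.toContinuousLinearMap (Matrix.mulVecLin C) with hCl
    have hFC0 := Cl.hasFDerivAt.comp_hasDerivAt t hF
    have hFC : HasDerivAt (fun u => Cl (∫ s in (0:ℝ)..u, G s)) (Cl (G t)) t := hFC0
    have heq : (fun _ : ℝ => (0 : Fin P → ℝ)) =ᶠ[nhds t]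
        (fun u => Cl (∫ s in (0:ℝ)..u, G s)) := by
      filter_upwards [isOpen_Ioo.mem_nhds ht] with x hx
      have : C.mulVec (∫ s in (0:ℝ)..x, G s) = 0 :=
        hkeyv x ⟨le_of_lt hx.1, le_of_lt hx.2⟩ v
      show (0 : Fin P → ℝ) = Cl (∫ s in (0:ℝ)..x, G s)
      rw [hCl]
      rw [LinearMap.coe_toContinuousLinearMap']
      exact this.symm
    have h0 : HasDerivAt (fun _ : ℝ => (0 : Fin P → ℝ)) (Cl (G t)) t :=
      hFC.congr_of_eventuallyEq heq
    have := h0.unique (hasDerivAt_const t 0)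
    rw [hCl, LinearMap.coe_toContinuousLinearMap'] at this
    exact this
  -- Step C: convert to the matrix statement and conclude
  have hmatzero : ∀ u ∈ Set.Ioo (0:ℝ) T, C * NormedSpace.exp (u • A) * D = 0 := by
    intro u hu
    have htu : (T - u) ∈ Set.Ioo (0:ℝ) T := ⟨by linarith [hu.2], by linarith [hu.1]⟩
    have hWu : W (T - u) = NormedSpace.exp (u • A) := by rw [hW]; norm_num
    ext p j
    have h := hg (T - u) htu (Pi.single j 1)
    rw [hWu, Matrix.mulVec_mulVec, Matrix.mulVec_single] at h
    have := congrFun h p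
    simpa [Matrix.mul_assoc] using this
  exact hDne (key_D_eq_zero hT A C hrank D hmatzero)
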